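/- Let S_a^μ = {σ ∈ S_a : σ·μ = μ} be the stabilizer of a set partition μ of [m] under the action of the Young subgroup S_a (acting by relabeling elements). If no block of μ contains two elements assigned the same color by κ_a, then |S_a^μ| = m(κ_a(μ))!, the product of factorials of multiplicities of the distinct blocks of the colored partition κ_a(μ). -/

import Mathlib

open Finset

/-- The multiset partition obtained by coloring the elements of a set partition `P`
of `[m]` via the coloring map `κ`. -/
def coloredF {m ℓ : ℕ} (κ : Fin m → Fin ℓ) (P : Finpartition (univ : Finset (Fin m))) :
    Multiset (Multiset (Fin ℓ)) :=
  P.parts.val.map fun B => B.val.map κ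

/-- `m(ρ̃)!` : the product over the distinct blocks of a multiset partition of the
factorial of the multiplicity of that block. -/
def mfact {β : Type*} [DecidableEq β] (s : Multiset β) : ℕ :=
  ∏ b ∈ s.toFinset, (s.count b).factorial

/-- Let `S_a^μ = {σ ∈ S_a : σ·μ = μ}` be the stabilizer of a set
partition `μ` of `[m]` under the Young subgroup `S_a` (here `S_a` is the stabilizer of
the monotone coloring map `κ = κ_a`, acting on set partitions by relabeling elements).
If no block of `μ` contains two elements of the same color, then
`|S_a^μ| = m(κ_a(μ))!`. -/
theorem stmt1 {m ℓ : ℕ} (κ : Fin m → Fin ℓ) (hκ : Monotone κ)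
    (P : Finpartition (univ : Finset (Fin m)))
    (hblocks : ∀ B ∈ P.parts, Set.InjOn κ ↑B) :
    Nat.card {σ : Equiv.Perm (Fin m) //
        κ ∘ ⇑σ = κ ∧ P.parts.image (fun B => B.image ⇑σ) = P.parts}
      = mfact (coloredF κ P) := by
  classical
  set f : {B // B ∈ P.parts} → Multiset (Fin ℓ) := fun B => B.1.val.map κ with hf
  -- the block containing x, as an element of α
  set bl : Fin m → {B // B ∈ P.parts} := fun x => ⟨P.part x, P.part_mem.2 (mem_univ x)⟩ with hbl
  -- Step A: bijection with stabilizer of f in Perm α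
  have key : Nat.card {σ : Equiv.Perm (Fin m) //
        κ ∘ ⇑σ = κ ∧ P.parts.image (fun B => B.image ⇑σ) = P.parts}
      = Nat.card {g : Equiv.Perm {B // B ∈ P.parts} // f ∘ g = f} := by
    apply Nat.card_congr
    have mkg : ∀ (σ : {σ : Equiv.Perm (Fin m) //
        κ ∘ ⇑σ = κ ∧ P.parts.image (fun B => B.image ⇑σ) = P.parts}),
        {g : Equiv.Perm {B // B ∈ P.parts} // (f ∘ g = f) ∧ ∀ B : {B // B ∈ P.parts}, (g B).1 = B.1.image ⇑σ.1} := by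
      rintro ⟨σ, hσκ, hσP⟩
      have hmem : ∀ B ∈ P.parts, B.image ⇑σ ∈ P.parts := by
        intro B hB
        rw [← hσP]
        exact Finset.mem_image_of_mem _ hB
      set g₀ : {B // B ∈ P.parts} → {B // B ∈ P.parts} := fun B => ⟨B.1.image ⇑σ, hmem _ B.2⟩ with hg₀
      have hinj : Function.Injective g₀ := by
        intro A B h
        exact Subtype.ext (Finset.image_injective σ.injective (congrArg Subtype.val h))
      refine ⟨Equiv.ofBijective g₀ (Finite.injective_iff_bijective.mp hinj), ?_, fun B => rfl⟩
      funext B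
      show ((B.1.image ⇑σ).val).map κ = B.1.val.map κ
      rw [Finset.image_val_of_injOn (σ.injective.injOn), Multiset.map_map, hσκ]
    refine Equiv.ofBijective (fun σ => ⟨(mkg σ).1, (mkg σ).2.1⟩) ⟨?_, ?_⟩
    · rintro ⟨σ₁, hσ₁κ, hσ₁P⟩ ⟨σ₂, hσ₂κ, hσ₂P⟩ h
      have hg : ∀ B : {B // B ∈ P.parts}, B.1.image ⇑σ₁ = B.1.image ⇑σ₂ := by
        intro B
        have := congrArg (fun g => (g.1 B).1) h
        simpa [(mkg _).2.2 B] using this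
      refine Subtype.ext (Equiv.ext fun x => ?_)
      have h1 : σ₁ x ∈ (P.part x).image ⇑σ₁ :=
        Finset.mem_image_of_mem _ (P.mem_part (mem_univ x))
      have h2 : σ₂ x ∈ (P.part x).image ⇑σ₁ := by
        rw [hg ⟨P.part x, P.part_mem.2 (mem_univ x)⟩]
        exact Finset.mem_image_of_mem _ (P.mem_part (mem_univ x))
      have hBmem : (P.part x).image ⇑σ₁ ∈ P.parts := by
        rw [← hσ₁P]
        exact Finset.mem_image_of_mem _ (P.part_mem.2 (mem_univ x))
      refine hblocks _ hBmem h1 h2 ?_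
      show κ (σ₁ x) = κ (σ₂ x)
      rw [show κ (σ₁ x) = κ x from congrFun hσ₁κ x, show κ (σ₂ x) = κ x from congrFun hσ₂κ x]
    · rintro ⟨g, hg⟩
      -- construct σ from g
      have hex : ∀ x : Fin m, ∃ y, y ∈ (g (bl x)).1 ∧ κ y = κ x := by
        intro x
        have hfx : f (g (bl x)) = f (bl x) := congrFun hg (bl x)
        have hx : κ x ∈ f (bl x) :=
          Multiset.mem_map_of_mem κ (P.mem_part (mem_univ x))
        rw [← hfx] at hx
        obtain ⟨y, hy, hyx⟩ := Multiset.mem_map.mp hx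
        exact ⟨y, hy, hyx⟩
      set σ₀ : Fin m → Fin m := fun x => (hex x).choose with hσ₀
      have hmem : ∀ x, σ₀ x ∈ (g (bl x)).1 := fun x => (hex x).choose_spec.1
      have hcol : ∀ x, κ (σ₀ x) = κ x := fun x => (hex x).choose_spec.2
      have hσ₀inj : Function.Injective σ₀ := by
        intro x y hxy
        have hblk : g (bl x) = g (bl y) := by
          refine Subtype.ext (P.eq_of_mem_parts (g (bl x)).2 (g (bl y)).2 (hmem x) ?_)
          rw [hxy]; exact hmem y
        have hpart : P.part x = P.part y := congrArg Subtype.val (g.injective hblk)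
        have hy : y ∈ P.part x := hpart ▸ P.mem_part (mem_univ y)
        refine hblocks _ (P.part_mem.2 (mem_univ x)) (P.mem_part (mem_univ x)) hy ?_
        show κ x = κ y
        rw [← hcol x, ← hcol y, hxy]
      set σ : Equiv.Perm (Fin m) :=
        Equiv.ofBijective σ₀ (Finite.injective_iff_bijective.mp hσ₀inj) with hσ
      have hσκ : κ ∘ ⇑σ = κ := funext fun x => hcol x
      have himg : ∀ B : {B // B ∈ P.parts}, B.1.image ⇑σ = (g B).1 := by
        intro B
        have hsub : B.1.image ⇑σ ⊆ (g B).1 := by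
          intro y hy
          obtain ⟨x, hx, rfl⟩ := Finset.mem_image.mp hy
          have hblx : bl x = B :=
            Subtype.ext (P.part_eq_of_mem B.2 hx)
          have := hmem x
          rwa [hblx] at this
        refine Finset.eq_of_subset_of_card_le hsub ?_
        have hc1 : (B.1.image ⇑σ).card = B.1.card :=
          Finset.card_image_of_injective _ σ.injective
        have hc2 : (g B).1.card = B.1.card := by
          have : Multiset.card (f (g B)) = Multiset.card (f B) :=
            congrArg Multiset.card (congrFun hg B)
          simp only [hf, Multiset.card_map] at this
          rw [Finset.card_def, Finset.card_def]
          exact this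
        rw [hc1, hc2]
      have hσP : P.parts.image (fun B => B.image ⇑σ) = P.parts := by
        apply Finset.Subset.antisymm
        · intro B' hB'
          obtain ⟨B, hB, rfl⟩ := Finset.mem_image.mp hB'
          rw [show B.image ⇑σ = (g ⟨B, hB⟩).1 from himg ⟨B, hB⟩]
          exact (g ⟨B, hB⟩).2
        · intro B hB
          obtain ⟨A, hA⟩ := g.surjective ⟨B, hB⟩
          refine Finset.mem_image.mpr ⟨A.1, A.2, ?_⟩
          rw [himg A, hA]
      refine ⟨⟨σ, hσκ, hσP⟩, ?_⟩
      refine Subtype.ext (Equiv.ext fun B => ?_)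
      refine Subtype.ext ?_
      show ((mkg ⟨σ, hσκ, hσP⟩).1 B).1 = (g B).1
      rw [(mkg _).2.2 B, himg B]
  rw [key, Nat.card_eq_fintype_card.trans (DomMulAct.stabilizer_card' f)]
  -- Step C : identify the product with mfact
  have himage : (coloredF κ P).toFinset = Finset.univ.image f := by
    ext b
    simp only [coloredF, Multiset.mem_toFinset, Multiset.mem_map, Finset.mem_image,
      Finset.mem_univ, true_and, hf]
    constructor
    · rintro ⟨B, hB, rfl⟩
      exact ⟨⟨B, hB⟩, rfl⟩
    · rintro ⟨⟨B, hB⟩, rfl⟩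
      exact ⟨B, hB, rfl⟩
  have hcount : ∀ b, (coloredF κ P).count b = Fintype.card {B : {B // B ∈ P.parts} // f B = b} := by
    intro b
    rw [Fintype.card_subtype, Finset.univ_eq_attach,
      Finset.filter_attach' P.parts (fun B : {B // B ∈ P.parts} => f B = b), Finset.card_map,
      Finset.card_attach]
    have h1 : P.parts.filter (fun B => ∃ h : B ∈ P.parts, f ⟨B, h⟩ = b)
        = P.parts.filter (fun B => B.val.map κ = b) := by
      apply Finset.filter_congr
      intro B hB
      simp [hf, hB]
    rw [h1, coloredF, Multiset.count_map, Finset.card_def, Finset.filter_val]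
    congr 1
    apply Multiset.filter_congr
    intro B _
    exact eq_comm
  rw [mfact, himage]
  exact Finset.prod_congr rfl fun b hb => by rw [hcount b]
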